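/- Let T be a tree in the family F (built from P_4 by operations O1 and O2). Then the function f assigning 2 to every vertex of LV(T) and 0 to every other vertex is a restrained Italian dominating function of T of minimum weight; hence γ_{rI}(T) = 2|LV(T)| = 2γ_r(T). -/

import Mathlib

open SimpleGraph Finset

/-- D is a restrained dominating set of the graph G restricted to vertex set vs. -/
def IsRDSOn (G : SimpleGraph ℕ) (vs D : Finset ℕ) : Prop :=
  D ⊆ vs ∧ ∀ v ∈ vs, v ∉ D → (∃ u ∈ D, G.Adj v u) ∧ ∃ u ∈ vs, u ∉ D ∧ G.Adj v u

/-- The restrained domination number of G on vertex set vs. -/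
noncomputable def rdnOn (G : SimpleGraph ℕ) (vs : Finset ℕ) : ℕ :=
  sInf {n | ∃ D : Finset ℕ, IsRDSOn G vs D ∧ D.card = n}

open Classical in
/-- f is a restrained Italian dominating function of G on vertex set vs. -/
def IsRIDFOn (G : SimpleGraph ℕ) (vs : Finset ℕ) (f : ℕ → ℕ) : Prop :=
  (∀ v ∈ vs, f v ≤ 2) ∧
  (∀ v ∈ vs, f v = 0 → 2 ≤ ∑ u ∈ vs.filter (fun u => G.Adj v u), f u) ∧
  (∀ v ∈ vs, f v = 0 → ∃ u ∈ vs, G.Adj v u ∧ f u = 0)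

/-- The restrained Italian domination number of G on vertex set vs. -/
noncomputable def ridnOn (G : SimpleGraph ℕ) (vs : Finset ℕ) : ℕ :=
  sInf {n | ∃ f : ℕ → ℕ, IsRIDFOn G vs f ∧ ∑ v ∈ vs, f v = n}

/-- The family 𝓕 of trees built from P₄ by operations O1 (attach an end-vertex of a new
P₃ to a vertex of LV) and O2 (attach the center of a new healthy spider S_{t,t} to a
vertex of LV).  `InF G vs lv` means: the graph G with vertex set vs is in the family,
with lv the set LV of vertices that were leaves at some stage of the construction. -/
inductive InF : SimpleGraph ℕ → Finset ℕ → Finset ℕ → Prop where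
  | base (a b c d : ℕ) (hab : a ≠ b) (hac : a ≠ c) (had : a ≠ d) (hbc : b ≠ c)
      (hbd : b ≠ d) (hcd : c ≠ d) :
      InF (SimpleGraph.fromEdgeSet {s(a, b), s(b, c), s(c, d)}) {a, b, c, d} {a, d}
  | o1 (G : SimpleGraph ℕ) (vs lv : Finset ℕ) (x u v w : ℕ) (hG : InF G vs lv)
      (hx : x ∈ lv) (hu : u ∉ vs) (hv : v ∉ vs) (hw : w ∉ vs)
      (huv : u ≠ v) (huw : u ≠ w) (hvw : v ≠ w) :
      InF (G ⊔ SimpleGraph.fromEdgeSet {s(x, u), s(u, v), s(v, w)})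
        (vs ∪ {u, v, w}) (lv ∪ {w})
  | o2 (G : SimpleGraph ℕ) (vs lv : Finset ℕ) (x : ℕ) (t : ℕ) (u : ℕ)
      (mid lf : Fin t → ℕ) (ht : 1 ≤ t) (hG : InF G vs lv) (hx : x ∈ lv)
      (hu : u ∉ vs) (hmid : ∀ i, mid i ∉ vs) (hlf : ∀ i, lf i ∉ vs)
      (hinj : Function.Injective
        (fun p : Fin t ⊕ Fin t ⊕ Unit => Sum.elim mid (Sum.elim lf fun _ => u) p)) :
      InF (G ⊔ SimpleGraph.fromEdgeSet
          (({s(x, u)} : Set (Sym2 ℕ)) ∪ ⋃ i : Fin t, {s(u, mid i), s(mid i, lf i)}))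
        (vs ∪ ({u} ∪ Finset.image mid Finset.univ ∪ Finset.image lf Finset.univ))
        (lv ∪ Finset.image lf Finset.univ)

open SimpleGraph Finset

lemma InF.lv_subset {G : SimpleGraph ℕ} {vs lv : Finset ℕ} (h : InF G vs lv) : lv ⊆ vs := by
  induction h with
  | base a b c d hab hac had hbc hbd hcd =>
    intro z hz
    simp only [Finset.mem_insert, Finset.mem_singleton] at hz ⊢
    tauto
  | o1 G vs lv x u v w hG hx hu hv hw huv huw hvw ih =>
    intro z hz
    simp only [Finset.mem_union, Finset.mem_insert, Finset.mem_singleton] at hz ⊢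
    rcases hz with hz | hz
    · exact Or.inl (ih hz)
    · tauto
  | o2 G vs lv x t u mid lf ht hG hx hu hmid hlf hinj ih =>
    intro z hz
    simp only [Finset.mem_union] at hz ⊢
    rcases hz with hz | hz
    · exact Or.inl (ih hz)
    · tauto

section Lemmas

lemma InF.adj_mem {G : SimpleGraph ℕ} {vs lv : Finset ℕ} (h : InF G vs lv) :
    ∀ p q, G.Adj p q → p ∈ vs ∧ q ∈ vs := by
  induction h with
  | base a b c d hab hac had hbc hbd hcd =>
    intro p q hpq
    simp only [SimpleGraph.fromEdgeSet_adj, Set.mem_insert_iff, Set.mem_singleton_iff,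
      Sym2.eq, Sym2.rel_iff', Prod.mk.injEq, Prod.swap_prod_mk] at hpq
    simp only [Finset.mem_insert, Finset.mem_singleton]
    rcases hpq with ⟨h1 | h1 | h1, _⟩ <;> rcases h1 with ⟨h2, h3⟩ | ⟨h2, h3⟩ <;>
      subst h2 <;> subst h3 <;> tauto
  | o1 G vs lv x u v w hG hx hu hv hw huv huw hvw ih =>
    intro p q hpq
    rcases hpq with hpq | hpq
    · have := ih p q hpq
      constructor <;> · simp only [Finset.mem_union]; tauto
    · simp only [SimpleGraph.fromEdgeSet_adj, Set.mem_insert_iff, Set.mem_singleton_iff,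
        Sym2.eq, Sym2.rel_iff', Prod.mk.injEq, Prod.swap_prod_mk] at hpq
      simp only [Finset.mem_union, Finset.mem_insert, Finset.mem_singleton]
      have hxvs : x ∈ vs := hG.lv_subset hx
      rcases hpq with ⟨h1 | h1 | h1, _⟩ <;> rcases h1 with ⟨h2, h3⟩ | ⟨h2, h3⟩ <;>
        subst h2 <;> subst h3 <;> tauto
  | o2 G vs lv x t u mid lf ht hG hx hu hmid hlf hinj ih =>
    intro p q hpq
    rcases hpq with hpq | hpq
    · have := ih p q hpq
      constructor <;> · simp only [Finset.mem_union]; tauto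
    · simp only [SimpleGraph.fromEdgeSet_adj, Set.mem_union, Set.mem_iUnion,
        Set.mem_insert_iff, Set.mem_singleton_iff,
        Sym2.eq, Sym2.rel_iff', Prod.mk.injEq, Prod.swap_prod_mk] at hpq
      simp only [Finset.mem_union, Finset.mem_insert, Finset.mem_singleton,
        Finset.mem_image, Finset.mem_univ, true_and]
      have hxvs : x ∈ vs := hG.lv_subset hx
      obtain ⟨h1, -⟩ := hpq
      rcases h1 with (⟨h2,h3⟩|⟨h2,h3⟩) | ⟨i, (⟨h2,h3⟩|⟨h2,h3⟩)|(⟨h2,h3⟩|⟨h2,h3⟩)⟩ <;>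
        subst h2 <;> subst h3 <;> refine ⟨?_, ?_⟩ <;> first
          | tauto
          | (right; right; exact ⟨i, rfl⟩)
          | (right; left; right; exact ⟨i, rfl⟩)
end Lemmas

section RDS

lemma fe_adj {S : Set (Sym2 ℕ)} {p q : ℕ} (h1 : s(p,q) ∈ S) (h2 : p ≠ q) :
    (SimpleGraph.fromEdgeSet S).Adj p q := by
  rw [SimpleGraph.fromEdgeSet_adj]; exact ⟨h1, h2⟩

lemma InF.rds {G : SimpleGraph ℕ} {vs lv : Finset ℕ} (h : InF G vs lv) :
    IsRDSOn G vs lv := by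
  induction h with
  | base a b c d hab hac had hbc hbd hcd =>
    constructor
    · exact (InF.base a b c d hab hac had hbc hbd hcd).lv_subset
    · intro z hz hzlv
      simp only [Finset.mem_insert, Finset.mem_singleton, not_or] at hz hzlv
      have hadjab : (SimpleGraph.fromEdgeSet {s(a,b), s(b,c), s(c,d)}).Adj a b :=
        fe_adj (by simp) hab
      have hadjbc : (SimpleGraph.fromEdgeSet {s(a,b), s(b,c), s(c,d)}).Adj b c :=
        fe_adj (by simp) hbc
      have hadjcd : (SimpleGraph.fromEdgeSet {s(a,b), s(b,c), s(c,d)}).Adj c d :=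
        fe_adj (by simp) hcd
      rcases hz with rfl | rfl | rfl | rfl
      · exact absurd (Or.inl rfl) (by tauto)
      · refine ⟨⟨a, by simp, hadjab.symm⟩, ⟨c, by simp, ?_, hadjbc⟩⟩
        simp only [Finset.mem_insert, Finset.mem_singleton]
        tauto
      · refine ⟨⟨d, by simp, hadjcd⟩, ⟨b, by simp, ?_, hadjbc.symm⟩⟩
        simp only [Finset.mem_insert, Finset.mem_singleton]
        tauto
      · exact absurd (Or.inr rfl) (by tauto)
  | o1 G vs lv x u v w hG hx hu hv hw huv huw hvw ih =>
    have hxvs : x ∈ vs := hG.lv_subset hx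
    have hxu : x ≠ u := fun h => hu (h ▸ hxvs)
    have hxv : x ≠ v := fun h => hv (h ▸ hxvs)
    have hxw : x ≠ w := fun h => hw (h ▸ hxvs)
    constructor
    · intro z hz
      simp only [Finset.mem_union, Finset.mem_insert, Finset.mem_singleton] at hz ⊢
      rcases hz with hz | hz
      · exact Or.inl (hG.lv_subset hz)
      · tauto
    · intro z hz hzlv
      simp only [Finset.mem_union, Finset.mem_insert, Finset.mem_singleton, not_or] at hz hzlv
      obtain ⟨hz1, hz2⟩ := hzlv
      have hAxu : (G ⊔ SimpleGraph.fromEdgeSet {s(x,u), s(u,v), s(v,w)}).Adj x u :=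
        Or.inr (fe_adj (by simp) hxu)
      have hAuv : (G ⊔ SimpleGraph.fromEdgeSet {s(x,u), s(u,v), s(v,w)}).Adj u v :=
        Or.inr (fe_adj (by simp) huv)
      have hAvw : (G ⊔ SimpleGraph.fromEdgeSet {s(x,u), s(u,v), s(v,w)}).Adj v w :=
        Or.inr (fe_adj (by simp) hvw)
      rcases hz with hz | rfl | rfl | rfl
      · -- old vertex
        obtain ⟨⟨p, hp1, hp2⟩, ⟨q, hq1, hq2, hq3⟩⟩ := ih.2 z hz hz1
        refine ⟨⟨p, ?_, Or.inl hp2⟩, ⟨q, ?_, ?_, Or.inl hq3⟩⟩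
        · simp only [Finset.mem_union]; exact Or.inl hp1
        · simp only [Finset.mem_union]; exact Or.inl hq1
        · simp only [Finset.mem_union, Finset.mem_singleton, not_or]
          exact ⟨hq2, fun h => hw (h ▸ hq1)⟩
      · -- z = u
        refine ⟨⟨x, ?_, hAxu.symm⟩, ⟨v, ?_, ?_, hAuv⟩⟩
        · simp only [Finset.mem_union]; exact Or.inl hx
        · simp only [Finset.mem_union, Finset.mem_insert, Finset.mem_singleton]; tauto
        · simp only [Finset.mem_union, Finset.mem_singleton, not_or]
          exact ⟨fun h => hv (hG.lv_subset h), hvw⟩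
      · -- z = v
        refine ⟨⟨w, ?_, hAvw⟩, ⟨u, ?_, ?_, hAuv.symm⟩⟩
        · simp only [Finset.mem_union, Finset.mem_singleton]; tauto
        · simp only [Finset.mem_union, Finset.mem_insert, Finset.mem_singleton]; tauto
        · simp only [Finset.mem_union, Finset.mem_singleton, not_or]
          exact ⟨fun h => hu (hG.lv_subset h), huw⟩
      · exact absurd rfl hz2
  | o2 G vs lv x t u mid lf ht hG hx hu hmid hlf hinj ih =>
    have hxvs : x ∈ vs := hG.lv_subset hx
    have hxu : x ≠ u := fun h => hu (h ▸ hxvs)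
    have hmidu : ∀ i, mid i ≠ u := fun i h => by
      have : (Sum.inl i : Fin t ⊕ (Fin t ⊕ Unit)) = Sum.inr (Sum.inr ()) :=
        hinj (by simpa using h)
      simp at this
    have hmidlf : ∀ i j, mid i ≠ lf j := fun i j h => by
      have : (Sum.inl i : Fin t ⊕ (Fin t ⊕ Unit)) = Sum.inr (Sum.inl j) :=
        hinj (by simpa using h)
      simp at this
    set H := SimpleGraph.fromEdgeSet
        (({s(x, u)} : Set (Sym2 ℕ)) ∪ ⋃ i : Fin t, {s(u, mid i), s(mid i, lf i)}) with hH
    have hAxu : (G ⊔ H).Adj x u := Or.inr (fe_adj (by simp) hxu)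
    have hAumid : ∀ i, (G ⊔ H).Adj u (mid i) :=
      fun i => Or.inr (fe_adj (Set.mem_union_right _ (Set.mem_iUnion.mpr ⟨i, Set.mem_insert _ _⟩)) (Ne.symm (hmidu i)))
    have hAmidlf : ∀ i, (G ⊔ H).Adj (mid i) (lf i) :=
      fun i => Or.inr (fe_adj (Set.mem_union_right _ (Set.mem_iUnion.mpr ⟨i, Set.mem_insert_of_mem _ rfl⟩)) (hmidlf i i))
    have i0 : Fin t := ⟨0, ht⟩
    constructor
    · intro z hz
      simp only [Finset.mem_union] at hz ⊢
      rcases hz with hz | hz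
      · exact Or.inl (hG.lv_subset hz)
      · tauto
    · intro z hz hzlv
      simp only [Finset.mem_union, Finset.mem_insert, Finset.mem_singleton,
        Finset.mem_image, Finset.mem_univ, true_and, not_or, not_exists] at hz hzlv
      obtain ⟨hz1, hz2⟩ := hzlv
      rcases hz with hz | (rfl | ⟨i, rfl⟩) | ⟨i, rfl⟩
      · obtain ⟨⟨p, hp1, hp2⟩, ⟨q, hq1, hq2, hq3⟩⟩ := ih.2 z hz hz1
        refine ⟨⟨p, ?_, Or.inl hp2⟩, ⟨q, ?_, ?_, Or.inl hq3⟩⟩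
        · simp only [Finset.mem_union]; exact Or.inl hp1
        · simp only [Finset.mem_union]; exact Or.inl hq1
        · simp only [Finset.mem_union, Finset.mem_image, Finset.mem_univ, true_and,
            not_or, not_exists]
          exact ⟨hq2, fun i h => hlf i (h ▸ hq1)⟩
      · -- z = u
        refine ⟨⟨x, ?_, hAxu.symm⟩, ⟨mid i0, ?_, ?_, hAumid i0⟩⟩
        · simp only [Finset.mem_union]; exact Or.inl hx
        · simp only [Finset.mem_union, Finset.mem_insert, Finset.mem_singleton,
            Finset.mem_image, Finset.mem_univ, true_and]
          exact Or.inr (Or.inl (Or.inr ⟨i0, rfl⟩))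
        · simp only [Finset.mem_union, Finset.mem_image, Finset.mem_univ, true_and,
            not_or, not_exists]
          exact ⟨fun h => hmid i0 (hG.lv_subset h), fun j h => hmidlf i0 j h.symm⟩
      · -- z = mid i
        refine ⟨⟨lf i, ?_, hAmidlf i⟩, ⟨u, ?_, ?_, (hAumid i).symm⟩⟩
        · simp only [Finset.mem_union, Finset.mem_image, Finset.mem_univ, true_and]
          exact Or.inr ⟨i, rfl⟩
        · simp only [Finset.mem_union, Finset.mem_insert, Finset.mem_singleton,
            Finset.mem_image, Finset.mem_univ, true_and]
          tauto
        · simp only [Finset.mem_union, Finset.mem_image, Finset.mem_univ, true_and,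
            not_or, not_exists]
          refine ⟨fun h => hu (hG.lv_subset h), fun j h => ?_⟩
          have : (Sum.inr (Sum.inl j) : Fin t ⊕ (Fin t ⊕ Unit)) = Sum.inr (Sum.inr ()) :=
            hinj (by simpa using h)
          simp at this
      · exact absurd rfl (hz2 i)

end RDS

section Core

open Classical in
open Classical in
/-- Neighbourhood of z inside vs, with a fixed choice of decidability instance
(matching the one used in `IsRIDFOn`). -/
noncomputable def Nb (G : SimpleGraph ℕ) (vs : Finset ℕ) (z : ℕ) : Finset ℕ :=
  vs.filter (fun p => G.Adj z p)

open Classical in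
lemma mem_Nb {G : SimpleGraph ℕ} {vs : Finset ℕ} {z p : ℕ} :
    p ∈ Nb G vs z ↔ p ∈ vs ∧ G.Adj z p := Finset.mem_filter


open Classical in
/-- RIDF relaxed on sets A (all conditions dropped) and B (only the 0-neighbor
condition dropped). -/
def Relaxed (G : SimpleGraph ℕ) (vs A B : Finset ℕ) (f : ℕ → ℕ) : Prop :=
  (∀ v ∈ vs, f v ≤ 2) ∧
  (∀ v ∈ vs, f v = 0 → v ∉ A → 2 ≤ ∑ u ∈ Nb G vs v, f u) ∧
  (∀ v ∈ vs, f v = 0 → v ∉ A → v ∉ B → ∃ u ∈ vs, G.Adj v u ∧ f u = 0)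

open Classical in
lemma relaxed_of_ridf {G : SimpleGraph ℕ} {vs : Finset ℕ} {f : ℕ → ℕ}
    (h : IsRIDFOn G vs f) : Relaxed G vs ∅ ∅ f := by
  obtain ⟨h1, h2, h3⟩ := h
  exact ⟨h1, fun v hv hf _ => h2 v hv hf, fun v hv hf _ _ => h3 v hv hf⟩

open Classical in
/-- The key local estimate: if x is a "leaf" (unique neighbour y) and y has
neighbourhood {x, z}, with y unrelaxed and x not fully relaxed, then f x + f y ≥ 2. -/
lemma pair_bound {G : SimpleGraph ℕ} {vs A B : Finset ℕ} {f : ℕ → ℕ}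
    (hf : Relaxed G vs A B f) {x y z : ℕ} (hxz : x ≠ z)
    (hxvs : x ∈ vs) (hyvs : y ∈ vs)
    (hxA : x ∉ A) (hyA : y ∉ A) (hyB : y ∉ B)
    (hNx : Nb G vs x = {y})
    (hNy : Nb G vs y = {x, z}) :
    2 ≤ f x + f y := by
  obtain ⟨h2, hsum, h0nb⟩ := hf
  by_cases hx0 : f x = 0
  · have := hsum x hxvs hx0 hxA
    rw [hNx, Finset.sum_singleton] at this
    omega
  by_cases hy0 : f y = 0
  · have hs := hsum y hyvs hy0 hyA
    rw [hNy] at hs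
    rw [Finset.sum_insert (by simpa using hxz), Finset.sum_singleton] at hs
    obtain ⟨u', hu'vs, hu'adj, hu'0⟩ := h0nb y hyvs hy0 hyA hyB
    have : u' ∈ Nb G vs y := mem_Nb.mpr ⟨hu'vs, hu'adj⟩
    rw [hNy, Finset.mem_insert, Finset.mem_singleton] at this
    rcases this with rfl | rfl
    · exact absurd hu'0 hx0
    · omega
  · omega

open Classical in
/-- The "attach side" lemma: handles the old tree together with the attach vertex x,
given that the conditions of f hold at every old vertex except possibly x, and at x
the domination sum may be helped by an external amount k. -/
lemma side {G : SimpleGraph ℕ} {vs lv : Finset ℕ}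
    (IH : ∀ A B : Finset ℕ, ∀ f : ℕ → ℕ, A ⊆ lv → B ⊆ lv → Relaxed G vs A B f →
      2 * lv.card ≤ (∑ v ∈ vs, f v) + 2 * A.card)
    {A B : Finset ℕ} {f : ℕ → ℕ} {x : ℕ} {k : ℕ}
    (hA : A ⊆ lv) (hB : B ⊆ lv) (hx : x ∈ lv) (hxvs : x ∈ vs)
    (h2 : ∀ z ∈ vs, f z ≤ 2)
    (hsum : ∀ z ∈ vs, f z = 0 → z ∉ A → z ≠ x →
      2 ≤ ∑ p ∈ Nb G vs z, f p)
    (h0nb : ∀ z ∈ vs, f z = 0 → z ∉ A → z ∉ B → z ≠ x →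
      ∃ p ∈ vs, G.Adj z p ∧ f p = 0)
    (hxc : x ∉ A → f x = 0 → 2 ≤ (∑ p ∈ Nb G vs x, f p) + k) :
    2 * lv.card ≤ (∑ v ∈ vs, f v) + 2 * A.card + k := by
  have hBx : insert x B ⊆ lv := Finset.insert_subset hx hB
  by_cases hxA : x ∈ A
  · have hrel : Relaxed G vs A (insert x B) f := by
      refine ⟨h2, fun z hz hf hzA => hsum z hz hf hzA (fun h => hzA (h ▸ hxA)),
        fun z hz hf hzA hzB => ?_⟩
      have hzx : z ≠ x := fun h => hzB (h ▸ Finset.mem_insert_self x B)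
      exact h0nb z hz hf hzA (fun h => hzB (Finset.mem_insert_of_mem h)) hzx
    have := IH A (insert x B) f hA hBx hrel
    omega
  by_cases hx0 : f x = 0
  swap
  · have hrel : Relaxed G vs A (insert x B) f := by
      refine ⟨h2, fun z hz hf hzA => hsum z hz hf hzA (fun h => hx0 (h ▸ hf)),
        fun z hz hf hzA hzB => ?_⟩
      have hzx : z ≠ x := fun h => hx0 (h ▸ hf)
      exact h0nb z hz hf hzA (fun h => hzB (Finset.mem_insert_of_mem h)) hzx
    have := IH A (insert x B) f hA hBx hrel
    omega
  -- now x ∉ A, f x = 0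
  have hks := hxc hxA hx0
  set s := ∑ p ∈ Nb G vs x, f p with hs
  rcases Nat.lt_or_ge s 2 with hslt | hsge
  swap
  · -- s ≥ 2 : f is Relaxed with x added to B
    have hrel : Relaxed G vs A (insert x B) f := by
      refine ⟨h2, fun z hz hf hzA => ?_, fun z hz hf hzA hzB => ?_⟩
      · by_cases hzx : z = x
        · subst hzx; exact hsge
        · exact hsum z hz hf hzA hzx
      · have hzx : z ≠ x := fun h => hzB (h ▸ Finset.mem_insert_self x B)
        exact h0nb z hz hf hzA (fun h => hzB (Finset.mem_insert_of_mem h)) hzx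
    have := IH A (insert x B) f hA hBx hrel
    omega
  rcases Nat.lt_or_ge s 1 with hs0 | hs1
  · -- s = 0 : fully relax x
    have hAx : insert x A ⊆ lv := Finset.insert_subset hx hA
    have hrel : Relaxed G vs (insert x A) B f := by
      refine ⟨h2, fun z hz hf hzA => ?_, fun z hz hf hzA hzB => ?_⟩
      · exact hsum z hz hf (fun h => hzA (Finset.mem_insert_of_mem h))
          (fun h => hzA (h ▸ Finset.mem_insert_self x A))
      · exact h0nb z hz hf (fun h => hzA (Finset.mem_insert_of_mem h)) hzB
          (fun h => hzA (h ▸ Finset.mem_insert_self x A))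
    have := IH (insert x A) B f hAx hB hrel
    rw [Finset.card_insert_of_notMem hxA] at this
    omega
  -- s = 1 : raise a weight-1 neighbour of x to 2
  have hseq : s = 1 := by omega
  have hkge : 1 ≤ k := by omega
  obtain ⟨z₀, hz₀mem, hz₀ne⟩ : ∃ z₀ ∈ Nb G vs x, f z₀ ≠ 0 := by
    by_contra hcon
    push_neg at hcon
    have : s = 0 := Finset.sum_eq_zero hcon
    omega
  have hz₀le : f z₀ ≤ s := Finset.single_le_sum (fun i _ => Nat.zero_le _) hz₀mem
  have hz₀1 : f z₀ = 1 := by omega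
  have hz₀vs : z₀ ∈ vs := (mem_Nb.mp hz₀mem).1
  set g : ℕ → ℕ := Function.update f z₀ 2 with hg
  have hgz₀ : g z₀ = 2 := Function.update_self z₀ 2 f
  have hgne : ∀ p, p ≠ z₀ → g p = f p := fun p hp => Function.update_of_ne hp 2 f
  have hfg : ∀ p, f p ≤ g p := by
    intro p
    by_cases hp : p = z₀
    · subst hp; rw [hgz₀, hz₀1]; omega
    · rw [hgne p hp]
  have hg0 : ∀ p, g p = 0 → f p = 0 ∧ p ≠ z₀ := by
    intro p hp
    by_cases hpz : p = z₀
    · subst hpz; rw [hgz₀] at hp; omega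
    · exact ⟨(hgne p hpz) ▸ hp, hpz⟩
  have hrel : Relaxed G vs A (insert x B) g := by
    refine ⟨fun p hp => ?_, fun z hz hf hzA => ?_, fun z hz hf hzA hzB => ?_⟩
    · by_cases hpz : p = z₀
      · subst hpz; rw [hgz₀]
      · rw [hgne p hpz]; exact h2 p hp
    · obtain ⟨hfz, hzz₀⟩ := hg0 z hf
      by_cases hzx : z = x
      · subst hzx
        calc (2:ℕ) = g z₀ := hgz₀.symm
          _ ≤ ∑ p ∈ Nb G vs z, g p :=
            Finset.single_le_sum (fun i _ => Nat.zero_le _) hz₀mem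
      · calc (2:ℕ) ≤ ∑ p ∈ Nb G vs z, f p := hsum z hz hfz hzA hzx
          _ ≤ ∑ p ∈ Nb G vs z, g p :=
            Finset.sum_le_sum (fun i _ => hfg i)
    · obtain ⟨hfz, hzz₀⟩ := hg0 z hf
      have hzx : z ≠ x := fun h => hzB (h ▸ Finset.mem_insert_self x B)
      obtain ⟨p, hp1, hp2, hp3⟩ := h0nb z hz hfz hzA
        (fun h => hzB (Finset.mem_insert_of_mem h)) hzx
      refine ⟨p, hp1, hp2, ?_⟩
      rw [hgne p (fun h => by rw [h, hz₀1] at hp3; exact one_ne_zero hp3)]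
      exact hp3
  have hIH := IH A (insert x B) g hA hBx hrel
  have hsumg : ∑ v ∈ vs, g v = (∑ v ∈ vs, f v) + 1 := by
    rw [hg, Finset.sum_update_of_mem hz₀vs]
    have h1 : ∑ p ∈ vs \ {z₀}, f p = ∑ p ∈ vs.erase z₀, f p := by
      rw [Finset.erase_eq]
    have h2 := Finset.add_sum_erase vs f hz₀vs
    omega
  omega

end Core

section Main

open Classical in
lemma InF.main {G : SimpleGraph ℕ} {vs lv : Finset ℕ} (h : InF G vs lv) :
    ∀ A B : Finset ℕ, ∀ f : ℕ → ℕ, A ⊆ lv → B ⊆ lv → Relaxed G vs A B f →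
      2 * lv.card ≤ (∑ v ∈ vs, f v) + 2 * A.card := by
  induction h with
  | base a b c d hab hac had hbc hbd hcd =>
    intro A B f hA hB hf
    set G : SimpleGraph ℕ := SimpleGraph.fromEdgeSet {s(a, b), s(b, c), s(c, d)} with hG
    set vs : Finset ℕ := {a, b, c, d} with hvs
    have havs : a ∈ vs := by simp [hvs]
    have hbvs : b ∈ vs := by simp [hvs]
    have hcvs : c ∈ vs := by simp [hvs]
    have hdvs : d ∈ vs := by simp [hvs]
    have hNa : Nb G vs a = {b} := by
      ext p
      simp only [mem_Nb, hvs, hG, Finset.mem_insert, Finset.mem_singleton,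
        SimpleGraph.fromEdgeSet_adj, Set.mem_insert_iff, Set.mem_singleton_iff,
        Sym2.eq, Sym2.rel_iff', Prod.mk.injEq, Prod.swap_prod_mk, true_and]
      omega
    have hNb : Nb G vs b = {a, c} := by
      ext p
      simp only [mem_Nb, hvs, hG, Finset.mem_insert, Finset.mem_singleton,
        SimpleGraph.fromEdgeSet_adj, Set.mem_insert_iff, Set.mem_singleton_iff,
        Sym2.eq, Sym2.rel_iff', Prod.mk.injEq, Prod.swap_prod_mk, true_and]
      omega
    have hNd : Nb G vs d = {c} := by
      ext p
      simp only [mem_Nb, hvs, hG, Finset.mem_insert, Finset.mem_singleton,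
        SimpleGraph.fromEdgeSet_adj, Set.mem_insert_iff, Set.mem_singleton_iff,
        Sym2.eq, Sym2.rel_iff', Prod.mk.injEq, Prod.swap_prod_mk, true_and]
      omega
    have hNc : Nb G vs c = {d, b} := by
      ext p
      simp only [mem_Nb, hvs, hG, Finset.mem_insert, Finset.mem_singleton,
        SimpleGraph.fromEdgeSet_adj, Set.mem_insert_iff, Set.mem_singleton_iff,
        Sym2.eq, Sym2.rel_iff', Prod.mk.injEq, Prod.swap_prod_mk, true_and]
      omega
    have hsub : ∀ z ∈ A ∪ B, z = a ∨ z = d := by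
      intro z hz
      rcases Finset.mem_union.mp hz with hz | hz
      · have := hA hz; simpa using this
      · have := hB hz; simpa using this
    have hbA : b ∉ A := fun h => by rcases hsub b (Finset.mem_union_left _ h) with h|h <;> omega
    have hbB : b ∉ B := fun h => by rcases hsub b (Finset.mem_union_right _ h) with h|h <;> omega
    have hcA : c ∉ A := fun h => by rcases hsub c (Finset.mem_union_left _ h) with h|h <;> omega
    have hcB : c ∉ B := fun h => by rcases hsub c (Finset.mem_union_right _ h) with h|h <;> omega
    have hpair1 : a ∈ A ∨ 2 ≤ f a + f b := by
      by_cases haA : a ∈ A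
      · exact Or.inl haA
      · exact Or.inr (pair_bound (x := a) (y := b) (z := c) hf hac havs hbvs haA hbA hbB hNa hNb)
    have hpair2 : d ∈ A ∨ 2 ≤ f c + f d := by
      by_cases hdA : d ∈ A
      · exact Or.inl hdA
      · have hdb : d ≠ b := fun h => hbd h.symm
        have := pair_bound (x := d) (y := c) (z := b) hf hdb hdvs hcvs hdA hcA hcB hNd hNc
        omega
    have hlvcard : ({a, d} : Finset ℕ).card = 2 := by
      rw [Finset.card_insert_of_notMem (by simp [had]), Finset.card_singleton]
    have hsumvs : ∑ v ∈ vs, f v = f a + f b + f c + f d := by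
      rw [hvs, Finset.sum_insert (by simp [hab, hac, had]),
        Finset.sum_insert (by simp [hbc, hbd]), Finset.sum_insert (by simp [hcd]),
        Finset.sum_singleton]
      ring
    rw [hlvcard, hsumvs]
    rcases hpair1 with haA | hp1 <;> rcases hpair2 with hdA | hp2
    · have hsub2 : ({a, d} : Finset ℕ) ⊆ A := by
        intro z hz; simp at hz; rcases hz with rfl | rfl <;> assumption
      have h2c := Finset.card_le_card hsub2
      rw [hlvcard] at h2c
      omega
    · have h1c : 1 ≤ A.card := Finset.card_pos.mpr ⟨a, haA⟩
      omega
    · have h1c : 1 ≤ A.card := Finset.card_pos.mpr ⟨d, hdA⟩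
      omega
    · omega
  | o1 G vs lv x u v w hG hx hu hv hw huv huw hvw ih =>
    intro A B f hA hB hf
    obtain ⟨hf2, hfsum, hf0⟩ := hf
    have hlvsub := hG.lv_subset
    have hedge := hG.adj_mem
    have hxvs : x ∈ vs := hlvsub hx
    have hxu : x ≠ u := fun h => hu (h ▸ hxvs)
    have hxv : x ≠ v := fun h => hv (h ▸ hxvs)
    have hxw : x ≠ w := fun h => hw (h ▸ hxvs)
    set G' : SimpleGraph ℕ := G ⊔ SimpleGraph.fromEdgeSet {s(x, u), s(u, v), s(v, w)}
      with hG'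
    set vs' : Finset ℕ := vs ∪ {u, v, w} with hvs'
    have hmem' : ∀ p, p ∈ vs' ↔ p ∈ vs ∨ p = u ∨ p = v ∨ p = w := by
      intro p
      simp only [hvs', Finset.mem_union, Finset.mem_insert, Finset.mem_singleton]
    have hadj : ∀ p q : ℕ, G'.Adj p q ↔ G.Adj p q ∨
        ((p = x ∧ q = u) ∨ (p = u ∧ q = x) ∨ (p = u ∧ q = v) ∨ (p = v ∧ q = u) ∨
         (p = v ∧ q = w) ∨ (p = w ∧ q = v)) := by
      intro p q
      rw [hG']
      simp only [SimpleGraph.sup_adj, SimpleGraph.fromEdgeSet_adj, Set.mem_insert_iff,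
        Set.mem_singleton_iff, Sym2.eq, Sym2.rel_iff', Prod.mk.injEq, Prod.swap_prod_mk]
      constructor
      · rintro (h | ⟨(h1 | h1 | h1), h2⟩)
        · exact Or.inl h
        · rcases h1 with h1 | h1
          · exact Or.inr (Or.inl h1)
          · exact Or.inr (Or.inr (Or.inl h1))
        · rcases h1 with h1 | h1
          · exact Or.inr (Or.inr (Or.inr (Or.inl h1)))
          · exact Or.inr (Or.inr (Or.inr (Or.inr (Or.inl h1))))
        · rcases h1 with h1 | h1
          · exact Or.inr (Or.inr (Or.inr (Or.inr (Or.inr (Or.inl h1)))))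
          · exact Or.inr (Or.inr (Or.inr (Or.inr (Or.inr (Or.inr h1)))))
      · rintro (h | h)
        · exact Or.inl h
        · refine Or.inr ?_
          rcases h with ⟨rfl,rfl⟩|⟨rfl,rfl⟩|⟨rfl,rfl⟩|⟨rfl,rfl⟩|⟨rfl,rfl⟩|⟨rfl,rfl⟩
          · exact ⟨Or.inl (Or.inl ⟨rfl, rfl⟩), hxu⟩
          · exact ⟨Or.inl (Or.inr ⟨rfl, rfl⟩), Ne.symm hxu⟩
          · exact ⟨Or.inr (Or.inl (Or.inl ⟨rfl, rfl⟩)), huv⟩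
          · exact ⟨Or.inr (Or.inl (Or.inr ⟨rfl, rfl⟩)), Ne.symm huv⟩
          · exact ⟨Or.inr (Or.inr (Or.inl ⟨rfl, rfl⟩)), hvw⟩
          · exact ⟨Or.inr (Or.inr (Or.inr ⟨rfl, rfl⟩)), Ne.symm hvw⟩
    have hNold : ∀ z ∈ vs, z ≠ x →
        Nb G' vs' z = Nb G vs z := by
      intro z hz hzx
      ext p
      simp only [mem_Nb, hmem' p]
      constructor
      · rintro ⟨hp, hadj'⟩
        rw [hadj] at hadj'
        rcases hadj' with h | h
        · exact ⟨(hedge z p h).2, h⟩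
        · exfalso
          rcases h with ⟨rfl,rfl⟩|⟨rfl,rfl⟩|⟨rfl,rfl⟩|⟨rfl,rfl⟩|⟨rfl,rfl⟩|⟨rfl,rfl⟩
          · exact hzx rfl
          · exact hu hz
          · exact hu hz
          · exact hv hz
          · exact hv hz
          · exact hw hz
      · rintro ⟨hp, hadjG⟩
        exact ⟨Or.inl hp, (hadj z p).mpr (Or.inl hadjG)⟩
    have hsumold : ∀ z ∈ vs, z ≠ x →
        ∑ p ∈ Nb G' vs' z, f p = ∑ p ∈ Nb G vs z, f p := by
      intro z hz hzx
      rw [hNold z hz hzx]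
    have hNx : Nb G' vs' x = insert u (Nb G vs x) := by
      ext p
      simp only [mem_Nb, hmem' p, Finset.mem_insert]
      constructor
      · rintro ⟨hp, hadj'⟩
        rw [hadj] at hadj'
        rcases hadj' with h | h
        · exact Or.inr ⟨(hedge x p h).2, h⟩
        · rcases h with ⟨h1,rfl⟩|⟨h1,rfl⟩|⟨h1,rfl⟩|⟨h1,rfl⟩|⟨h1,rfl⟩|⟨h1,rfl⟩
          · exact Or.inl rfl
          · exact absurd h1 hxu
          · exact absurd h1 hxu
          · exact absurd h1 hxv
          · exact absurd h1 hxv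
          · exact absurd h1 hxw
      · rintro (rfl | ⟨hp, hadjG⟩)
        · exact ⟨Or.inr (Or.inl rfl), (hadj x p).mpr (Or.inr (Or.inl ⟨rfl, rfl⟩))⟩
        · exact ⟨Or.inl hp, (hadj x p).mpr (Or.inl hadjG)⟩
    have hNw : Nb G' vs' w = {v} := by
      ext p
      simp only [mem_Nb, hmem' p, Finset.mem_singleton]
      constructor
      · rintro ⟨hp, hadj'⟩
        rw [hadj] at hadj'
        rcases hadj' with h | h
        · exact absurd (hedge w p h).1 hw
        · rcases h with ⟨h1,rfl⟩|⟨h1,rfl⟩|⟨h1,rfl⟩|⟨h1,rfl⟩|⟨h1,rfl⟩|⟨h1,rfl⟩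
          · exact absurd h1.symm hxw
          · exact absurd h1.symm huw
          · exact absurd h1.symm huw
          · exact absurd h1.symm hvw
          · exact absurd h1.symm hvw
          · rfl
      · intro hpv
        exact ⟨Or.inr (Or.inr (Or.inl hpv)),
          (hadj w p).mpr (Or.inr (Or.inr (Or.inr (Or.inr (Or.inr (Or.inr ⟨rfl, hpv⟩))))))⟩
    have hNv : Nb G' vs' v = {w, u} := by
      ext p
      simp only [mem_Nb, hmem' p, Finset.mem_insert, Finset.mem_singleton]
      constructor
      · rintro ⟨hp, hadj'⟩
        rw [hadj] at hadj'
        rcases hadj' with h | h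
        · exact absurd (hedge v p h).1 hv
        · rcases h with ⟨h1,rfl⟩|⟨h1,rfl⟩|⟨h1,rfl⟩|⟨h1,rfl⟩|⟨h1,rfl⟩|⟨h1,rfl⟩
          · exact absurd h1.symm hxv
          · exact absurd h1.symm huv
          · exact absurd h1.symm huv
          · exact Or.inr rfl
          · exact Or.inl rfl
          · exact absurd h1 hvw
      · intro hpm
        rcases hpm with hpm | hpm
        · exact ⟨Or.inr (Or.inr (Or.inr hpm)),
            (hadj v p).mpr (Or.inr (Or.inr (Or.inr (Or.inr (Or.inr (Or.inl ⟨rfl, hpm⟩))))))⟩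
        · exact ⟨Or.inr (Or.inl hpm),
            (hadj v p).mpr (Or.inr (Or.inr (Or.inr (Or.inr (Or.inl ⟨rfl, hpm⟩)))))⟩
    -- sum decomposition
    have hdisj : Disjoint vs ({u, v, w} : Finset ℕ) := by
      rw [Finset.disjoint_right]
      intro p hp
      simp only [Finset.mem_insert, Finset.mem_singleton] at hp
      rcases hp with rfl | rfl | rfl <;> assumption
    have hsumdec : ∑ p ∈ vs', f p = (∑ p ∈ vs, f p) + (f u + f v + f w) := by
      rw [hvs', Finset.sum_union hdisj, Finset.sum_insert (by simp [huv, huw]),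
        Finset.sum_insert (by simp [hvw]), Finset.sum_singleton]
      ring
    have hwlv : w ∉ lv := fun h => hw (hlvsub h)
    have hlvcard : (lv ∪ {w}).card = lv.card + 1 := by
      have hins : lv ∪ {w} = insert w lv := by
        ext z; simp [or_comm]
      rw [hins, Finset.card_insert_of_notMem hwlv]
    -- relaxation sets for the old tree
    have hA' : A.erase w ⊆ lv := by
      intro z hz
      have h1 := Finset.mem_of_mem_erase hz
      have h2 := Finset.ne_of_mem_erase hz
      rcases Finset.mem_union.mp (hA h1) with h | h
      · exact h
      · exact absurd (Finset.mem_singleton.mp h) h2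
    have hB' : B.erase w ⊆ lv := by
      intro z hz
      have h1 := Finset.mem_of_mem_erase hz
      have h2 := Finset.ne_of_mem_erase hz
      rcases Finset.mem_union.mp (hB h1) with h | h
      · exact h
      · exact absurd (Finset.mem_singleton.mp h) h2
    have hnotA : ∀ z ∈ vs, z ∉ A.erase w → z ∉ A := by
      intro z hz hze hzA
      exact hze (Finset.mem_erase.mpr ⟨fun h => hw (h ▸ hz), hzA⟩)
    have hnotB : ∀ z ∈ vs, z ∉ B.erase w → z ∉ B := by
      intro z hz hze hzB
      exact hze (Finset.mem_erase.mpr ⟨fun h => hw (h ▸ hz), hzB⟩)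
    -- side lemma
    have hside : 2 * lv.card ≤ (∑ p ∈ vs, f p) + 2 * (A.erase w).card + f u := by
      refine side ih hA' hB' hx hxvs (fun z hz => hf2 z (Finset.mem_union_left _ hz))
        ?_ ?_ ?_
      · intro z hz hz0 hzA hzx
        have := hfsum z (Finset.mem_union_left _ hz) hz0 (hnotA z hz hzA)
        rwa [hsumold z hz hzx] at this
      · intro z hz hz0 hzA hzB hzx
        obtain ⟨p, hp1, hp2, hp3⟩ := hf0 z (Finset.mem_union_left _ hz) hz0
          (hnotA z hz hzA) (hnotB z hz hzB)
        have hpf : p ∈ Nb G vs z := by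
          rw [← hNold z hz hzx]
          exact mem_Nb.mpr ⟨hp1, hp2⟩
        exact ⟨p, (mem_Nb.mp hpf).1, (mem_Nb.mp hpf).2, hp3⟩
      · intro hxA hx0
        have := hfsum x (Finset.mem_union_left _ hxvs) hx0 (hnotA x hxvs hxA)
        rw [hNx, Finset.sum_insert (fun hcon => hu (mem_Nb.mp hcon).1)] at this
        omega
    -- pair bound for the new branch
    have hpair : w ∈ A ∨ 2 ≤ f w + f v := by
      by_cases hwA : w ∈ A
      · exact Or.inl hwA
      · have hvA : v ∉ A := fun hvA => by
          rcases Finset.mem_union.mp (hA hvA) with h | h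
          · exact hv (hlvsub h)
          · exact hvw (Finset.mem_singleton.mp h)
        have hvB : v ∉ B := fun hvB => by
          rcases Finset.mem_union.mp (hB hvB) with h | h
          · exact hv (hlvsub h)
          · exact hvw (Finset.mem_singleton.mp h)
        have hwvs' : w ∈ vs' := by rw [hmem']; tauto
        have hvvs' : v ∈ vs' := by rw [hmem']; tauto
        exact Or.inr (pair_bound (x := w) (y := v) (z := u)
          ⟨hf2, hfsum, hf0⟩ (Ne.symm huw) hwvs' hvvs' hwA hvA hvB hNw hNv)
    rw [hlvcard, hsumdec]
    rcases hpair with hwA | hp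
    · have h1 : (A.erase w).card = A.card - 1 := Finset.card_erase_of_mem hwA
      have h2 : 1 ≤ A.card := Finset.card_pos.mpr ⟨w, hwA⟩
      omega
    · by_cases hwA : w ∈ A
      · have h1 : (A.erase w).card = A.card - 1 := Finset.card_erase_of_mem hwA
        have h2 : 1 ≤ A.card := Finset.card_pos.mpr ⟨w, hwA⟩
        omega
      · rw [Finset.erase_eq_of_notMem hwA] at hside
        omega
  | o2 G vs lv x t u mid lf ht hG hx hu hmid hlf hinj ih =>
    intro A B f hA hB hf
    obtain ⟨hf2, hfsum, hf0⟩ := hf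
    have hlvsub := hG.lv_subset
    have hedge := hG.adj_mem
    have hxvs : x ∈ vs := hlvsub hx
    have hxu : x ≠ u := fun h => hu (h ▸ hxvs)
    have hxmid : ∀ i, x ≠ mid i := fun i h => hmid i (h ▸ hxvs)
    have hxlf : ∀ i, x ≠ lf i := fun i h => hlf i (h ▸ hxvs)
    have hmidu : ∀ i, mid i ≠ u := fun i h => by
      have : (Sum.inl i : Fin t ⊕ (Fin t ⊕ Unit)) = Sum.inr (Sum.inr ()) :=
        hinj (by simpa using h)
      simp at this
    have hlfu : ∀ i, lf i ≠ u := fun i h => by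
      have : (Sum.inr (Sum.inl i) : Fin t ⊕ (Fin t ⊕ Unit)) = Sum.inr (Sum.inr ()) :=
        hinj (by simpa using h)
      simp at this
    have hmidlf : ∀ i j, mid i ≠ lf j := fun i j h => by
      have : (Sum.inl i : Fin t ⊕ (Fin t ⊕ Unit)) = Sum.inr (Sum.inl j) :=
        hinj (by simpa using h)
      simp at this
    have hmidinj : Function.Injective mid := fun i j h => by
      have : (Sum.inl i : Fin t ⊕ (Fin t ⊕ Unit)) = Sum.inl j := hinj (by simpa using h)
      simpa using this
    have hlfinj : Function.Injective lf := fun i j h => by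
      have : (Sum.inr (Sum.inl i) : Fin t ⊕ (Fin t ⊕ Unit)) = Sum.inr (Sum.inl j) :=
        hinj (by simpa using h)
      simpa using this
    set G' : SimpleGraph ℕ := G ⊔ SimpleGraph.fromEdgeSet
        (({s(x, u)} : Set (Sym2 ℕ)) ∪ ⋃ i : Fin t, {s(u, mid i), s(mid i, lf i)}) with hG'
    set vs' : Finset ℕ := vs ∪ ({u} ∪ Finset.image mid Finset.univ
        ∪ Finset.image lf Finset.univ) with hvs'
    have hmem' : ∀ p, p ∈ vs' ↔ p ∈ vs ∨ p = u ∨ (∃ i, mid i = p) ∨ (∃ i, lf i = p) := by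
      intro p
      simp only [hvs', Finset.mem_union, Finset.mem_singleton, Finset.mem_image,
        Finset.mem_univ, true_and]
      tauto
    have hadj : ∀ p q : ℕ, G'.Adj p q ↔ G.Adj p q ∨
        ((p = x ∧ q = u) ∨ (p = u ∧ q = x)) ∨
        (∃ i, (p = u ∧ q = mid i) ∨ (p = mid i ∧ q = u) ∨
              (p = mid i ∧ q = lf i) ∨ (p = lf i ∧ q = mid i)) := by
      intro p q
      rw [hG']
      simp only [SimpleGraph.sup_adj, SimpleGraph.fromEdgeSet_adj, Set.mem_union,
        Set.mem_singleton_iff, Set.mem_iUnion, Set.mem_insert_iff,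
        Sym2.eq, Sym2.rel_iff', Prod.mk.injEq, Prod.swap_prod_mk]
      constructor
      · rintro (h | ⟨(h1 | ⟨i, h1 | h1⟩), h2⟩)
        · exact Or.inl h
        · rcases h1 with h1 | h1
          · exact Or.inr (Or.inl (Or.inl h1))
          · exact Or.inr (Or.inl (Or.inr h1))
        · rcases h1 with h1 | h1
          · exact Or.inr (Or.inr ⟨i, Or.inl h1⟩)
          · exact Or.inr (Or.inr ⟨i, Or.inr (Or.inl h1)⟩)
        · rcases h1 with h1 | h1
          · exact Or.inr (Or.inr ⟨i, Or.inr (Or.inr (Or.inl h1))⟩)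
          · exact Or.inr (Or.inr ⟨i, Or.inr (Or.inr (Or.inr h1))⟩)
      · rintro (h | (⟨rfl, rfl⟩ | ⟨rfl, rfl⟩) | ⟨i, ⟨rfl, rfl⟩ | ⟨rfl, rfl⟩ | ⟨rfl, rfl⟩ | ⟨rfl, rfl⟩⟩)
        · exact Or.inl h
        · exact Or.inr ⟨Or.inl (Or.inl ⟨rfl, rfl⟩), hxu⟩
        · exact Or.inr ⟨Or.inl (Or.inr ⟨rfl, rfl⟩), Ne.symm hxu⟩
        · exact Or.inr ⟨Or.inr ⟨i, Or.inl (Or.inl ⟨rfl, rfl⟩)⟩, Ne.symm (hmidu i)⟩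
        · exact Or.inr ⟨Or.inr ⟨i, Or.inl (Or.inr ⟨rfl, rfl⟩)⟩, hmidu i⟩
        · exact Or.inr ⟨Or.inr ⟨i, Or.inr (Or.inl ⟨rfl, rfl⟩)⟩, hmidlf i i⟩
        · exact Or.inr ⟨Or.inr ⟨i, Or.inr (Or.inr ⟨rfl, rfl⟩)⟩, Ne.symm (hmidlf i i)⟩
    have hNold : ∀ z ∈ vs, z ≠ x → Nb G' vs' z = Nb G vs z := by
      intro z hz hzx
      ext p
      simp only [mem_Nb, hmem' p]
      constructor
      · rintro ⟨hp, hadj'⟩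
        rw [hadj] at hadj'
        rcases hadj' with h | (⟨rfl, rfl⟩ | ⟨rfl, rfl⟩) |
          ⟨i, ⟨rfl, rfl⟩ | ⟨rfl, rfl⟩ | ⟨rfl, rfl⟩ | ⟨rfl, rfl⟩⟩
        · exact ⟨(hedge z p h).2, h⟩
        · exact absurd rfl hzx
        · exact absurd hz hu
        · exact absurd hz hu
        · exact absurd hz (hmid i)
        · exact absurd hz (hmid i)
        · exact absurd hz (hlf i)
      · rintro ⟨hp, hadjG⟩
        exact ⟨Or.inl hp, (hadj z p).mpr (Or.inl hadjG)⟩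
    have hsumold : ∀ z ∈ vs, z ≠ x →
        ∑ p ∈ Nb G' vs' z, f p = ∑ p ∈ Nb G vs z, f p := by
      intro z hz hzx
      rw [hNold z hz hzx]
    have hNx : Nb G' vs' x = insert u (Nb G vs x) := by
      ext p
      simp only [mem_Nb, hmem' p, Finset.mem_insert]
      constructor
      · rintro ⟨hp, hadj'⟩
        rw [hadj] at hadj'
        rcases hadj' with h | (⟨h1, rfl⟩ | ⟨h1, rfl⟩) |
          ⟨i, ⟨h1, rfl⟩ | ⟨h1, rfl⟩ | ⟨h1, rfl⟩ | ⟨h1, rfl⟩⟩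
        · exact Or.inr ⟨(hedge x p h).2, h⟩
        · exact Or.inl rfl
        · exact absurd h1 hxu
        · exact absurd h1 hxu
        · exact absurd h1 (hxmid i)
        · exact absurd h1 (hxmid i)
        · exact absurd h1 (hxlf i)
      · rintro (rfl | ⟨hp, hadjG⟩)
        · exact ⟨Or.inr (Or.inl rfl), (hadj x p).mpr (Or.inr (Or.inl (Or.inl ⟨rfl, rfl⟩)))⟩
        · exact ⟨Or.inl hp, (hadj x p).mpr (Or.inl hadjG)⟩
    have hNlf : ∀ i, Nb G' vs' (lf i) = {mid i} := by
      intro i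
      ext p
      simp only [mem_Nb, hmem' p, Finset.mem_singleton]
      constructor
      · rintro ⟨hp, hadj'⟩
        rw [hadj] at hadj'
        rcases hadj' with h | (⟨h1, rfl⟩ | ⟨h1, rfl⟩) |
          ⟨j, ⟨h1, rfl⟩ | ⟨h1, rfl⟩ | ⟨h1, rfl⟩ | ⟨h1, rfl⟩⟩
        · exact absurd (hedge (lf i) p h).1 (hlf i)
        · exact absurd h1.symm (hxlf i)
        · exact absurd h1 (hlfu i)
        · exact absurd h1 (hlfu i)
        · exact absurd h1.symm (hmidlf j i)
        · exact absurd h1.symm (hmidlf j i)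
        · rw [hlfinj h1]
      · intro hpm
        refine ⟨Or.inr (Or.inr (Or.inl ⟨i, hpm.symm⟩)), (hadj (lf i) p).mpr
          (Or.inr (Or.inr ⟨i, Or.inr (Or.inr (Or.inr ⟨rfl, hpm⟩))⟩))⟩
    have hNmid : ∀ i, Nb G' vs' (mid i) = {lf i, u} := by
      intro i
      ext p
      simp only [mem_Nb, hmem' p, Finset.mem_insert, Finset.mem_singleton]
      constructor
      · rintro ⟨hp, hadj'⟩
        rw [hadj] at hadj'
        rcases hadj' with h | (⟨h1, rfl⟩ | ⟨h1, rfl⟩) |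
          ⟨j, ⟨h1, rfl⟩ | ⟨h1, rfl⟩ | ⟨h1, rfl⟩ | ⟨h1, rfl⟩⟩
        · exact absurd (hedge (mid i) p h).1 (hmid i)
        · exact absurd h1.symm (hxmid i)
        · exact absurd h1 (hmidu i)
        · exact absurd h1 (hmidu i)
        · exact Or.inr rfl
        · rw [hmidinj h1]
          exact Or.inl rfl
        · exact absurd h1 (hmidlf i j)
      · intro hpm
        rcases hpm with hpm | hpm
        · exact ⟨Or.inr (Or.inr (Or.inr ⟨i, hpm.symm⟩)), (hadj (mid i) p).mpr
            (Or.inr (Or.inr ⟨i, Or.inr (Or.inr (Or.inl ⟨rfl, hpm⟩))⟩))⟩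
        · exact ⟨Or.inr (Or.inl hpm), (hadj (mid i) p).mpr
            (Or.inr (Or.inr ⟨i, Or.inr (Or.inl ⟨rfl, hpm⟩)⟩))⟩
    -- sum decomposition
    have hdisj1 : Disjoint vs ({u} ∪ Finset.image mid Finset.univ
        ∪ Finset.image lf Finset.univ) := by
      rw [Finset.disjoint_right]
      intro p hp
      simp only [Finset.mem_union, Finset.mem_singleton, Finset.mem_image,
        Finset.mem_univ, true_and] at hp
      rcases hp with (rfl | ⟨i, rfl⟩) | ⟨i, rfl⟩
      · exact hu
      · exact hmid i
      · exact hlf i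
    have hdisj2 : Disjoint ({u} ∪ Finset.image mid Finset.univ)
        (Finset.image lf Finset.univ) := by
      rw [Finset.disjoint_right]
      intro p hp
      simp only [Finset.mem_image, Finset.mem_univ, true_and] at hp
      obtain ⟨i, rfl⟩ := hp
      simp only [Finset.mem_union, Finset.mem_singleton, Finset.mem_image,
        Finset.mem_univ, true_and, not_or, not_exists]
      exact ⟨hlfu i, fun j h => hmidlf j i h⟩
    have hdisj3 : Disjoint ({u} : Finset ℕ) (Finset.image mid Finset.univ) := by
      rw [Finset.disjoint_right]
      intro p hp
      simp only [Finset.mem_image, Finset.mem_univ, true_and] at hp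
      obtain ⟨i, rfl⟩ := hp
      simp only [Finset.mem_singleton]
      exact hmidu i
    have hsumdec : ∑ p ∈ vs', f p = (∑ p ∈ vs, f p)
        + (f u + (∑ i : Fin t, f (mid i)) + (∑ i : Fin t, f (lf i))) := by
      rw [hvs', Finset.sum_union hdisj1, Finset.sum_union hdisj2,
        Finset.sum_union hdisj3, Finset.sum_singleton,
        Finset.sum_image (fun i _ j _ h => hmidinj h),
        Finset.sum_image (fun i _ j _ h => hlfinj h)]
    have hlvdisj : Disjoint lv (Finset.image lf Finset.univ) := by
      rw [Finset.disjoint_right]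
      intro p hp
      simp only [Finset.mem_image, Finset.mem_univ, true_and] at hp
      obtain ⟨i, rfl⟩ := hp
      exact fun h => hlf i (hlvsub h)
    have hlvcard : (lv ∪ Finset.image lf Finset.univ).card = lv.card + t := by
      rw [Finset.card_union_of_disjoint hlvdisj,
        Finset.card_image_of_injective _ hlfinj]
      simp
    -- relaxation sets
    have hnotA : ∀ z ∈ vs, z ∉ A ∩ lv → z ∉ A := by
      intro z hz hzi hzA
      rcases Finset.mem_union.mp (hA hzA) with h | h
      · exact hzi (Finset.mem_inter.mpr ⟨hzA, h⟩)
      · simp only [Finset.mem_image, Finset.mem_univ, true_and] at h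
        obtain ⟨i, rfl⟩ := h
        exact hlf i hz
    have hnotB : ∀ z ∈ vs, z ∉ B ∩ lv → z ∉ B := by
      intro z hz hzi hzB
      rcases Finset.mem_union.mp (hB hzB) with h | h
      · exact hzi (Finset.mem_inter.mpr ⟨hzB, h⟩)
      · simp only [Finset.mem_image, Finset.mem_univ, true_and] at h
        obtain ⟨i, rfl⟩ := h
        exact hlf i hz
    -- side lemma
    have hside : 2 * lv.card ≤ (∑ p ∈ vs, f p) + 2 * (A ∩ lv).card + f u := by
      refine side (A := A ∩ lv) (B := B ∩ lv) ih Finset.inter_subset_right Finset.inter_subset_right hx hxvs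
        (fun z hz => hf2 z (Finset.mem_union_left _ hz)) ?_ ?_ ?_
      · intro z hz hz0 hzA hzx
        have := hfsum z (Finset.mem_union_left _ hz) hz0 (hnotA z hz hzA)
        rwa [hsumold z hz hzx] at this
      · intro z hz hz0 hzA hzB hzx
        obtain ⟨p, hp1, hp2, hp3⟩ := hf0 z (Finset.mem_union_left _ hz) hz0
          (hnotA z hz hzA) (hnotB z hz hzB)
        have hpf : p ∈ Nb G vs z := by
          rw [← hNold z hz hzx]
          exact mem_Nb.mpr ⟨hp1, hp2⟩
        exact ⟨p, (mem_Nb.mp hpf).1, (mem_Nb.mp hpf).2, hp3⟩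
      · intro hxA hx0
        have := hfsum x (Finset.mem_union_left _ hxvs) hx0 (hnotA x hxvs hxA)
        rw [hNx, Finset.sum_insert (fun hcon => hu (mem_Nb.mp hcon).1)] at this
        omega
    -- branch bounds
    have hbranch : ∀ i : Fin t, 2 ≤ f (mid i) + f (lf i)
        + (if lf i ∈ A then 2 else 0) := by
      intro i
      by_cases hlfA : lf i ∈ A
      · rw [if_pos hlfA]; omega
      · rw [if_neg hlfA]
        have hmidA : mid i ∉ A := fun hc => by
          rcases Finset.mem_union.mp (hA hc) with h | h
          · exact hmid i (hlvsub h)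
          · simp only [Finset.mem_image, Finset.mem_univ, true_and] at h
            obtain ⟨j, hj⟩ := h
            exact hmidlf i j hj.symm
        have hmidB : mid i ∉ B := fun hc => by
          rcases Finset.mem_union.mp (hB hc) with h | h
          · exact hmid i (hlvsub h)
          · simp only [Finset.mem_image, Finset.mem_univ, true_and] at h
            obtain ⟨j, hj⟩ := h
            exact hmidlf i j hj.symm
        have hlfvs' : lf i ∈ vs' := by
          rw [hmem']
          exact Or.inr (Or.inr (Or.inr ⟨i, rfl⟩))
        have hmidvs' : mid i ∈ vs' := by
          rw [hmem']
          exact Or.inr (Or.inr (Or.inl ⟨i, rfl⟩))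
        have := pair_bound (x := lf i) (y := mid i) (z := u) ⟨hf2, hfsum, hf0⟩
          (hlfu i) hlfvs' hmidvs' hlfA hmidA hmidB (hNlf i) (hNmid i)
        omega
    have hfc : ∑ i : Fin t, (if lf i ∈ A then 2 else 0)
        = 2 * (Finset.univ.filter (fun i => lf i ∈ A)).card := by
      rw [Finset.sum_ite, Finset.sum_const, Finset.sum_const]
      simp [mul_comm]
    have hbr : 2 * t ≤ (∑ i : Fin t, f (mid i)) + (∑ i : Fin t, f (lf i))
        + 2 * (Finset.univ.filter (fun i => lf i ∈ A)).card := by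
      have h1 : ∑ i : Fin t, (2:ℕ) ≤
          ∑ i : Fin t, (f (mid i) + f (lf i) + (if lf i ∈ A then 2 else 0)) :=
        Finset.sum_le_sum (fun i _ => hbranch i)
      rw [Finset.sum_const, Finset.card_univ, Fintype.card_fin, smul_eq_mul,
        mul_comm] at h1
      rw [Finset.sum_add_distrib, Finset.sum_add_distrib, hfc] at h1
      exact h1
    -- card inequality
    have hAcard : (A ∩ lv).card + (Finset.univ.filter (fun i => lf i ∈ A)).card
        ≤ A.card := by
      have h1 : (Finset.univ.filter (fun i => lf i ∈ A)).card
          = (Finset.image lf (Finset.univ.filter (fun i => lf i ∈ A))).card :=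
        (Finset.card_image_of_injective _ hlfinj).symm
      have h2 : Finset.image lf (Finset.univ.filter (fun i => lf i ∈ A))
          ⊆ A ∩ Finset.image lf Finset.univ := by
        intro z hz
        simp only [Finset.mem_image, Finset.mem_filter, Finset.mem_univ, true_and] at hz
        obtain ⟨i, hiA, rfl⟩ := hz
        exact Finset.mem_inter.mpr ⟨hiA, Finset.mem_image.mpr ⟨i, Finset.mem_univ i, rfl⟩⟩
      have h3 := Finset.card_le_card h2
      have h4 : Disjoint (A ∩ lv) (A ∩ Finset.image lf Finset.univ) :=
        Finset.disjoint_of_subset_left Finset.inter_subset_right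
          (Finset.disjoint_of_subset_right Finset.inter_subset_right hlvdisj)
      have h5 : (A ∩ lv) ∪ (A ∩ Finset.image lf Finset.univ) ⊆ A :=
        Finset.union_subset Finset.inter_subset_left Finset.inter_subset_left
      have h6 := Finset.card_le_card h5
      rw [Finset.card_union_of_disjoint h4] at h6
      omega
    rw [hlvcard, hsumdec]
    omega

end Main

open Classical in
/-- For a tree T in the family 𝓕, assigning 2 to every vertex of LV(T) and 0 elsewhere
is a minimum-weight restrained Italian dominating function; hence
γ_{rI}(T) = 2 |LV(T)| = 2 γ_r(T). -/
theorem lv_ridf_min (G : SimpleGraph ℕ) (vs lv : Finset ℕ) (h : InF G vs lv) :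
    IsRIDFOn G vs (fun v => if v ∈ lv then 2 else 0) ∧
    ridnOn G vs = 2 * lv.card ∧
    ridnOn G vs = 2 * rdnOn G vs := by
  have hrds := h.rds
  have hlvsub := h.lv_subset
  have hmain := h.main
  have hRIDF : IsRIDFOn G vs (fun v => if v ∈ lv then 2 else 0) := by
    refine ⟨?_, ?_, ?_⟩
    · intro v hv
      by_cases hvl : v ∈ lv <;> simp [hvl]
    · intro v hv hf0
      simp only at hf0
      have hvlv : v ∉ lv := by
        intro hc
        rw [if_pos hc] at hf0
        omega
      obtain ⟨⟨p, hp1, hp2⟩, -⟩ := hrds.2 v hv hvlv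
      have hpm : p ∈ Nb G vs v := mem_Nb.mpr ⟨hlvsub hp1, hp2⟩
      show 2 ≤ ∑ q ∈ Nb G vs v, (fun q => if q ∈ lv then 2 else 0) q
      calc (2:ℕ) = if p ∈ lv then 2 else 0 := (if_pos hp1).symm
        _ ≤ ∑ q ∈ Nb G vs v, (fun q => if q ∈ lv then 2 else 0) q :=
          Finset.single_le_sum (f := fun q => if q ∈ lv then 2 else 0)
            (fun i _ => by positivity) hpm
    · intro v hv hf0
      simp only at hf0
      have hvlv : v ∉ lv := by
        intro hc
        rw [if_pos hc] at hf0
        omega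
      obtain ⟨-, q, hq1, hq2, hq3⟩ := hrds.2 v hv hvlv
      exact ⟨q, hq1, hq3, if_neg hq2⟩
  have hsumflv : ∑ v ∈ vs, (fun v => if v ∈ lv then 2 else 0) v = 2 * lv.card := by
    simp only
    rw [Finset.sum_ite_mem, Finset.inter_eq_right.mpr hlvsub, Finset.sum_const,
      smul_eq_mul, mul_comm]
  have hmem : 2 * lv.card ∈ {n | ∃ f : ℕ → ℕ, IsRIDFOn G vs f ∧ ∑ v ∈ vs, f v = n} :=
    ⟨_, hRIDF, hsumflv⟩
  have hlow : ∀ n ∈ {n | ∃ f : ℕ → ℕ, IsRIDFOn G vs f ∧ ∑ v ∈ vs, f v = n},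
      2 * lv.card ≤ n := by
    rintro n ⟨f, hf, rfl⟩
    have := hmain ∅ ∅ f (Finset.empty_subset _) (Finset.empty_subset _)
      (relaxed_of_ridf hf)
    simpa using this
  have hridn : ridnOn G vs = 2 * lv.card :=
    le_antisymm (Nat.sInf_le hmem) (le_csInf ⟨_, hmem⟩ hlow)
  have hrdn : rdnOn G vs = lv.card := by
    refine le_antisymm (Nat.sInf_le ⟨lv, hrds, rfl⟩) (le_csInf ⟨lv.card, lv, hrds, rfl⟩ ?_)
    rintro n ⟨D, hD, rfl⟩
    have hDsub := hD.1
    have hfD : Relaxed G vs ∅ ∅ (fun v => if v ∈ D then 2 else 0) := by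
      refine ⟨?_, ?_, ?_⟩
      · intro v hv
        by_cases hvD : v ∈ D <;> simp [hvD]
      · rintro v hv hf0 -
        simp only at hf0
        have hvD : v ∉ D := by
          intro hc
          rw [if_pos hc] at hf0
          omega
        obtain ⟨⟨p, hp1, hp2⟩, -⟩ := hD.2 v hv hvD
        have hpm : p ∈ Nb G vs v := mem_Nb.mpr ⟨hDsub hp1, hp2⟩
        calc (2:ℕ) = if p ∈ D then 2 else 0 := (if_pos hp1).symm
          _ ≤ _ := Finset.single_le_sum (f := fun q => if q ∈ D then 2 else 0)
              (fun i _ => by positivity) hpm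
      · rintro v hv hf0 - -
        simp only at hf0
        have hvD : v ∉ D := by
          intro hc
          rw [if_pos hc] at hf0
          omega
        obtain ⟨-, q, hq1, hq2, hq3⟩ := hD.2 v hv hvD
        exact ⟨q, hq1, hq3, if_neg hq2⟩
    have h1 := hmain ∅ ∅ _ (Finset.empty_subset _) (Finset.empty_subset _) hfD
    have h2 : ∑ v ∈ vs, (fun v => if v ∈ D then 2 else 0) v = 2 * D.card := by
      simp only
      rw [Finset.sum_ite_mem, Finset.inter_eq_right.mpr hDsub, Finset.sum_const,
        smul_eq_mul, mul_comm]
    rw [h2] at h1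
    simp only [Finset.card_empty, mul_zero, add_zero] at h1
    omega
  exact ⟨hRIDF, hridn, by rw [hridn, hrdn]⟩
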